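/- Let Γ be a group with finite generating set S acting by isometries on a metric space (X, ρ), let x₀ ∈ X and L = max_{σ∈S} ρ(x₀, σx₀). Suppose γ = a·γ′·b in Γ with l_S(γ) = l_S(a) + l_S(γ′) + l_S(b) and l_S(γ′) > 0, and suppose γ is (L, η)-straight, i.e. ρ(x₀, γx₀) ≥ (L − η)·l_S(γ) for some η ≥ 0. Then γ′ is (L, Cη)-straight with C = l_S(γ)/l_S(γ′), i.e. ρ(x₀, γ′x₀) ≥ (L − Cη)·l_S(γ′). -/

import Mathlib

open Pointwise

/-- The word length of `γ` with respect to a generating set `S`: the least `n` such that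
`γ` is a product of `n` elements of `S ∪ S⁻¹` (so the identity has word length `0`). -/
noncomputable def wordLength {Γ : Type*} [Group Γ] (S : Set Γ) (γ : Γ) : ℕ :=
  sInf {n : ℕ | γ ∈ (S ∪ S⁻¹) ^ n}

private lemma list_prod_mem_pow {Γ : Type*} [Group Γ] (T : Set Γ) :
    ∀ l : List Γ, (∀ y ∈ l, y ∈ T) → l.prod ∈ T ^ l.length := by
  intro l
  induction l with
  | nil => intro _; simp [Set.mem_one]
  | cons x xs ih =>
      intro h
      simp only [List.prod_cons, List.length_cons, pow_succ']
      exact Set.mul_mem_mul (h x (by simp)) (ih fun y hy => h y (by simp [hy]))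

private lemma wl_nonempty {Γ : Type*} [Group Γ] {S : Set Γ}
    (hgen : Subgroup.closure S = ⊤) (g : Γ) :
    g ∈ (S ∪ S⁻¹) ^ wordLength S g := by
  have hg : g ∈ (Subgroup.closure S).toSubmonoid := by rw [hgen]; trivial
  rw [Subgroup.closure_toSubmonoid] at hg
  obtain ⟨l, hl, hprod⟩ := Submonoid.exists_list_of_mem_closure hg
  have : l.length ∈ {n : ℕ | g ∈ (S ∪ S⁻¹) ^ n} := by
    simpa [hprod] using list_prod_mem_pow _ l hl
  exact Nat.sInf_mem ⟨l.length, this⟩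

theorem stmt_14 {Γ X : Type*} [Group Γ] [MetricSpace X] [MulAction Γ X]
    (hiso : ∀ γ : Γ, Isometry fun x : X => γ • x)
    (S : Finset Γ) (hSne : S.Nonempty)
    (hgen : Subgroup.closure (S : Set Γ) = ⊤)
    (x₀ : X) (L : ℝ) (hL : L = S.sup' hSne fun σ => dist x₀ (σ • x₀))
    (η : ℝ) (hη : 0 ≤ η) (γ a γ' b : Γ)
    (hdecomp : γ = a * γ' * b)
    (hlen : wordLength (S : Set Γ) γ =
      wordLength (S : Set Γ) a + wordLength (S : Set Γ) γ' + wordLength (S : Set Γ) b)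
    (hpos : 0 < wordLength (S : Set Γ) γ')
    (hstraight : dist x₀ (γ • x₀) ≥ (L - η) * (wordLength (S : Set Γ) γ : ℝ)) :
    dist x₀ (γ' • x₀) ≥
      (L - ((wordLength (S : Set Γ) γ : ℝ) / (wordLength (S : Set Γ) γ' : ℝ)) * η) *
        (wordLength (S : Set Γ) γ' : ℝ) := by
  -- dist x₀ (t • x₀) ≤ L for t ∈ S ∪ S⁻¹
  have hdist_eq : ∀ (g : Γ) (x y : X), dist (g • x) (g • y) = dist x y :=
    fun g x y => (hiso g).dist_eq x y
  have hgenL : ∀ t : Γ, t ∈ (S : Set Γ) ∪ (S : Set Γ)⁻¹ → dist x₀ (t • x₀) ≤ L := by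
    intro t ht
    rcases ht with ht | ht
    · rw [hL]; exact Finset.le_sup' (fun σ => dist x₀ (σ • x₀)) ht
    · have heq : dist x₀ (t • x₀) = dist x₀ (t⁻¹⁻¹ • x₀) := by rw [inv_inv]
      rw [heq, ← hdist_eq t⁻¹ x₀ (t⁻¹⁻¹ • x₀), smul_inv_smul, dist_comm, hL]
      exact Finset.le_sup' (fun σ => dist x₀ (σ • x₀)) (Set.mem_inv.mp ht)
  -- dist x₀ (g • x₀) ≤ L * n for g ∈ (S ∪ S⁻¹)^n
  have key : ∀ (n : ℕ) (g : Γ), g ∈ ((S : Set Γ) ∪ (S : Set Γ)⁻¹) ^ n →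
      dist x₀ (g • x₀) ≤ L * n := by
    intro n
    induction n with
    | zero => intro g hg; rw [pow_zero, Set.mem_one] at hg; simp [hg]
    | succ n ih =>
        intro g hg
        rw [pow_succ'] at hg
        obtain ⟨t, ht, h, hh, rfl⟩ := hg
        calc dist x₀ ((t * h) • x₀) ≤ dist x₀ (t • x₀) + dist (t • x₀) ((t * h) • x₀) :=
              dist_triangle _ _ _
          _ = dist x₀ (t • x₀) + dist x₀ (h • x₀) := by rw [mul_smul, hdist_eq]
          _ ≤ L + L * n := add_le_add (hgenL t ht) (ih h hh)
          _ = L * ((n : ℕ) + 1 : ℝ) := by ring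
          _ = L * ((n + 1 : ℕ) : ℝ) := by push_cast; ring
  have hbound : ∀ g : Γ, dist x₀ (g • x₀) ≤ L * (wordLength (S : Set Γ) g : ℝ) :=
    fun g => key _ g (wl_nonempty hgen g)
  -- triangle inequality
  set la := (wordLength (S : Set Γ) a : ℝ) with hladef
  set lg := (wordLength (S : Set Γ) γ : ℝ) with hlgdef
  set lg' := (wordLength (S : Set Γ) γ' : ℝ) with hlg'def
  set lb := (wordLength (S : Set Γ) b : ℝ) with hlbdef
  have hlg : lg = la + lg' + lb := by
    simp only [la, lg, lg', lb, hlen]; push_cast; ring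
  have htri : dist x₀ (γ • x₀) ≤ L * la + dist x₀ (γ' • x₀) + L * lb := by
    calc dist x₀ (γ • x₀) ≤ dist x₀ (a • x₀) + dist (a • x₀) ((a * γ') • x₀)
          + dist ((a * γ') • x₀) (γ • x₀) := dist_triangle4 _ _ _ _
      _ = dist x₀ (a • x₀) + dist x₀ (γ' • x₀) + dist x₀ (b • x₀) := by
          rw [hdecomp, mul_smul, hdist_eq, mul_assoc, mul_smul a, mul_smul γ', hdist_eq, hdist_eq]
      _ ≤ L * la + dist x₀ (γ' • x₀) + L * lb :=
          add_le_add (add_le_add (hbound a) le_rfl) (hbound b)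
  have hlg'pos : (0:ℝ) < lg' := by rw [hlg'def]; exact_mod_cast hpos
  have h1 : L * lg' - η * lg ≤ dist x₀ (γ' • x₀) := by
    have h2 : (L - η) * lg ≤ L * la + dist x₀ (γ' • x₀) + L * lb := le_trans hstraight htri
    rw [hlg] at h2 ⊢
    ring_nf at h2 ⊢
    linarith
  have hne : lg' ≠ 0 := ne_of_gt hlg'pos
  calc (L - lg / lg' * η) * lg' = L * lg' - η * lg := by field_simp
    _ ≤ dist x₀ (γ' • x₀) := h1
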